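/- Let α be a finite type with decidable equality, let g be a permutation of α, and let f be a permutation of α × Bool lifting g (i.e. (f (a,b)).1 = g a for all a, b). Let a : α and set ℓ(a) = Function.minimalPeriod g a. If f swaps the fiber over a, i.e. (f ^ ℓ(a)) (a, true) ≠ (a, true), then for every b : Bool one has Function.minimalPeriod f (a, b) = 2 * ℓ(a), and moreover (a, true) and (a, false) lie in the same cycle of f, i.e. f.SameCycle (a, true) (a, false). -/
import Mathlib

private lemma iter_fst {α : Type*} (g : Equiv.Perm α) (f : Equiv.Perm (α × Bool))
    (hf : ∀ (a : α) (b : Bool), (f (a, b)).1 = g a) :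
    ∀ (n : ℕ) (a : α) (b : Bool), ((f ^ n) (a, b)).1 = (g ^ n) a := by
  intro n
  induction n with
  | zero => intro a b; simp
  | succ n ih =>
    intro a b
    rw [pow_succ', Equiv.Perm.mul_apply, pow_succ', Equiv.Perm.mul_apply]
    have h1 : (f ((f ^ n) (a, b))).1 = g (((f ^ n) (a, b)).1) := by
      obtain ⟨x, c⟩ := (f ^ n) (a, b); exact hf x c
    rw [h1, ih a b]

theorem lift_swapping_fiber_gives_single_double_cycle
    {α : Type*} [Fintype α] [DecidableEq α]
    (g : Equiv.Perm α) (f : Equiv.Perm (α × Bool))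
    (hf : ∀ (a : α) (b : Bool), (f (a, b)).1 = g a)
    (a : α)
    (hswap : (f ^ Function.minimalPeriod g a) (a, true) ≠ (a, true)) :
    (∀ b : Bool, Function.minimalPeriod f (a, b) = 2 * Function.minimalPeriod g a) ∧
    f.SameCycle (a, true) (a, false) := by
  set l := Function.minimalPeriod g a with hl
  have hga : Function.IsPeriodicPt (⇑g) (orderOf g) a := by
    show (g ^ orderOf g) a = a
    rw [pow_orderOf_eq_one]; rfl
  have hlpos : 0 < l := hga.minimalPeriod_pos (orderOf_pos g)
  have hgl : (g ^ l) a = a := Function.iterate_minimalPeriod (f := ⇑g) (x := a)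
  have hft1 : ((f ^ l) (a, true)).1 = a := by rw [iter_fst g f hf]; exact hgl
  have hff1 : ((f ^ l) (a, false)).1 = a := by rw [iter_fst g f hf]; exact hgl
  have h2 : (f ^ l) (a, true) = (a, false) := by
    rcases hE : (f ^ l) (a, true) with ⟨x, c⟩
    rw [hE] at hft1 hswap
    cases c <;> simp_all
  have h3 : (f ^ l) (a, false) = (a, true) := by
    rcases hE : (f ^ l) (a, false) with ⟨x, c⟩
    rw [hE] at hff1
    simp only at hff1
    subst hff1
    cases c
    · simpa using (f ^ l).injective (h2.trans hE.symm)
    · rfl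
  have h2l : ∀ b : Bool, (f ^ (2 * l)) (a, b) = (a, b) := by
    intro b
    rw [two_mul, pow_add, Equiv.Perm.mul_apply]
    cases b
    · rw [h3, h2]
    · rw [h2, h3]
  refine ⟨fun b => ?_, ⟨(l : ℤ), by simpa using h2⟩⟩
  set p := Function.minimalPeriod f (a, b) with hp
  have hfp : (f ^ p) (a, b) = (a, b) :=
    Function.iterate_minimalPeriod (f := ⇑f) (x := (a, b))
  have hfa : Function.IsPeriodicPt (⇑f) (orderOf f) (a, b) := by
    show (f ^ orderOf f) (a, b) = (a, b)
    rw [pow_orderOf_eq_one]; rfl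
  have hppos : 0 < p := hfa.minimalPeriod_pos (orderOf_pos f)
  have hdvd2l : p ∣ 2 * l :=
    Function.IsPeriodicPt.minimalPeriod_dvd (h2l b)
  have hldvd : l ∣ p := by
    have : (g ^ p) a = a := by
      have := congrArg Prod.fst hfp
      rwa [iter_fst g f hf] at this
    exact Function.IsPeriodicPt.minimalPeriod_dvd this
  have hpne : p ≠ l := by
    intro h
    rw [h] at hfp
    cases b
    · rw [h3] at hfp; simp at hfp
    · rw [h2] at hfp; simp at hfp
  obtain ⟨k, hk⟩ := hldvd
  have hk2 : k ∣ 2 := by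
    rcases hdvd2l with ⟨m, hm⟩
    rw [hk, mul_assoc] at hm
    have : k * m = 2 := by
      have := Nat.eq_of_mul_eq_mul_left hlpos (by linarith [hm] : l * 2 = l * (k * m))
      omega
    exact ⟨m, this.symm⟩
  rcases (Nat.dvd_prime Nat.prime_two).mp hk2 with h | h
  · exact absurd (by rw [hk, h, mul_one]) hpne
  · rw [hk, h, mul_comm]
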